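/- Entropy Box Theorem: given discrete random variables X₁,…,Xₙ with finite joint entropy H(X), there exist nonnegative reals h₁,…,hₙ such that H(X) = ∑_{i=1}^n h_i and for every A ⊆ [n], H(X_A | X_{A*}) ≤ ∑_{i∈A} h_i ≤ H(X_A | X_{A_*}), where for A with minimal element a and maximal element b, A_* = {1,…,a-1} and A* = {i ∉ A : 1 ≤ i ≤ b-1}. (One may take h_i = H(X_i | X_{[i-1]}).) -/

import Mathlib

open Finset

/-- Probability that the discrete random variable `X` takes the value `v`,
where `p` is the probability mass function on the finite sample space `Ω`. -/
noncomputable def probOf {Ω S : Type*} [Fintype Ω] [DecidableEq S]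
    (p : Ω → ℝ) (X : Ω → S) (v : S) : ℝ :=
  ∑ ω ∈ univ.filter (fun ω => X ω = v), p ω

/-- Shannon entropy (base 2) of a discrete random variable. -/
noncomputable def H {Ω S : Type*} [Fintype Ω] [DecidableEq S]
    (p : Ω → ℝ) (X : Ω → S) : ℝ :=
  -∑ v ∈ univ.image X, probOf p X v * Real.logb 2 (probOf p X v)

/-- Conditional Shannon entropy `H(X | Y)`. -/
noncomputable def condH {Ω S T : Type*} [Fintype Ω] [DecidableEq S] [DecidableEq T]
    (p : Ω → ℝ) (X : Ω → S) (Y : Ω → T) : ℝ :=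
  -∑ v ∈ univ.image (fun ω => (X ω, Y ω)),
      probOf p (fun ω => (X ω, Y ω)) v *
        Real.logb 2 (probOf p (fun ω => (X ω, Y ω)) v / probOf p Y v.2)

/-- Joint entropy of the subfamily `(X i)_{i ∈ A}`. -/
noncomputable def jointH {Ω S : Type*} [Fintype Ω] [DecidableEq S] {n : ℕ}
    (p : Ω → ℝ) (X : Fin n → Ω → S) (A : Finset (Fin n)) : ℝ :=
  H p (fun ω (i : {i // i ∈ A}) => X i.1 ω)

/-- Conditional joint entropy `H(X_A | X_B)`. -/
noncomputable def condJointH {Ω S : Type*} [Fintype Ω] [DecidableEq S] {n : ℕ}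
    (p : Ω → ℝ) (X : Fin n → Ω → S) (A B : Finset (Fin n)) : ℝ :=
  condH p (fun ω (i : {i // i ∈ A}) => X i.1 ω) (fun ω (i : {i // i ∈ B}) => X i.1 ω)

section basic
variable {Ω S T : Type*} [Fintype Ω] [DecidableEq S] [DecidableEq T] {p : Ω → ℝ}

lemma probOf_nonneg (hp : ∀ ω, 0 ≤ p ω) (X : Ω → S) (v : S) : 0 ≤ probOf p X v :=
  Finset.sum_nonneg fun ω _ => hp ω

lemma marginal (X : Ω → S) (π : S → T) (w : T) :
    ∑ v ∈ (univ.image X).filter (fun v => π v = w), probOf p X v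
      = probOf p (fun ω => π (X ω)) w := by
  have hmaps : ∀ ω ∈ univ.filter (fun ω => π (X ω) = w),
      X ω ∈ (univ.image X).filter (fun v => π v = w) := by
    intro ω hω
    simp only [Finset.mem_filter, Finset.mem_univ, true_and] at hω ⊢
    exact ⟨Finset.mem_image_of_mem X (Finset.mem_univ ω), hω⟩
  rw [probOf, ← Finset.sum_fiberwise_of_maps_to hmaps p]
  apply Finset.sum_congr rfl
  intro v hv
  simp only [Finset.mem_filter, Finset.mem_univ, true_and] at hv
  rw [probOf]
  apply Finset.sum_congr _ (fun _ _ => rfl)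
  ext ω
  simp only [Finset.mem_filter, Finset.mem_univ, true_and]
  constructor
  · intro h; exact ⟨by rw [h, hv.2], h⟩
  · rintro ⟨_, h2⟩; exact h2

lemma probOf_total (hsum : ∑ ω, p ω = 1) (X : Ω → S) :
    ∑ v ∈ univ.image X, probOf p X v = 1 := by
  rw [← hsum]
  exact Finset.sum_fiberwise_of_maps_to
    (fun ω _ => Finset.mem_image_of_mem X (Finset.mem_univ ω)) p

lemma probOf_le_map (hp : ∀ ω, 0 ≤ p ω) (X : Ω → S) (π : S → T) (v : S) :
    probOf p X v ≤ probOf p (fun ω => π (X ω)) (π v) := by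
  apply Finset.sum_le_sum_of_subset_of_nonneg
  · intro ω hω
    simp only [Finset.mem_filter, Finset.mem_univ, true_and] at hω ⊢
    rw [hω]
  · exact fun ω _ _ => hp ω

lemma H_map (X : Ω → S) (π : S → T) :
    H p (fun ω => π (X ω)) =
      -∑ v ∈ univ.image X,
          probOf p X v * Real.logb 2 (probOf p (fun ω => π (X ω)) (π v)) := by
  have hmaps : ∀ v ∈ univ.image X, π v ∈ univ.image (fun ω => π (X ω)) := by
    intro v hv
    simp only [Finset.mem_image, Finset.mem_univ, true_and] at hv ⊢
    obtain ⟨ω, rfl⟩ := hv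
    exact ⟨ω, rfl⟩
  rw [H, neg_inj, ← Finset.sum_fiberwise_of_maps_to hmaps
    (fun v => probOf p X v * Real.logb 2 (probOf p (fun ω => π (X ω)) (π v)))]
  apply Finset.sum_congr rfl
  intro w hw
  have : ∑ v ∈ (univ.image X).filter (fun v => π v = w),
      probOf p X v * Real.logb 2 (probOf p (fun ω => π (X ω)) (π v))
      = ∑ v ∈ (univ.image X).filter (fun v => π v = w),
      probOf p X v * Real.logb 2 (probOf p (fun ω => π (X ω)) w) := by
    apply Finset.sum_congr rfl
    intro v hv
    simp only [Finset.mem_filter] at hv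
    rw [hv.2]
  rw [this, ← Finset.sum_mul, marginal]

lemma condH_chain (hp : ∀ ω, 0 ≤ p ω) (X : Ω → S) (Y : Ω → T) :
    condH p X Y = H p (fun ω => (X ω, Y ω)) - H p Y := by
  have hY : H p Y = -∑ v ∈ univ.image (fun ω => (X ω, Y ω)),
      probOf p (fun ω => (X ω, Y ω)) v * Real.logb 2 (probOf p Y v.2) :=
    H_map (fun ω => (X ω, Y ω)) Prod.snd
  rw [condH, hY, H]
  have key : ∑ v ∈ univ.image (fun ω => (X ω, Y ω)),
      probOf p (fun ω => (X ω, Y ω)) v *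
        Real.logb 2 (probOf p (fun ω => (X ω, Y ω)) v / probOf p Y v.2)
      = ∑ v ∈ univ.image (fun ω => (X ω, Y ω)),
      (probOf p (fun ω => (X ω, Y ω)) v * Real.logb 2 (probOf p (fun ω => (X ω, Y ω)) v)
        - probOf p (fun ω => (X ω, Y ω)) v * Real.logb 2 (probOf p Y v.2)) := by
    apply Finset.sum_congr rfl
    intro v hv
    set P := probOf p (fun ω => (X ω, Y ω)) v with hP
    set Q := probOf p Y v.2 with hQ
    by_cases h0 : P = 0
    · simp [h0]
    · have hPpos : 0 < P := lt_of_le_of_ne (probOf_nonneg hp _ _) (Ne.symm h0)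
      have hQpos : 0 < Q := lt_of_lt_of_le hPpos (probOf_le_map hp _ Prod.snd v)
      rw [Real.logb_div h0 (ne_of_gt hQpos)]
      ring
  rw [key, Finset.sum_sub_distrib]
  ring

lemma condH_nonneg (hp : ∀ ω, 0 ≤ p ω) (X : Ω → S) (Y : Ω → T) :
    0 ≤ condH p X Y := by
  rw [condH, neg_nonneg]
  apply Finset.sum_nonpos
  intro v hv
  set P := probOf p (fun ω => (X ω, Y ω)) v with hP
  set Q := probOf p Y v.2 with hQ
  by_cases h0 : P = 0
  · simp [h0]
  · have hPpos : 0 < P := lt_of_le_of_ne (probOf_nonneg hp _ _) (Ne.symm h0)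
    have hPQ : P ≤ Q := probOf_le_map hp _ Prod.snd v
    apply mul_nonpos_of_nonneg_of_nonpos (le_of_lt hPpos)
    apply Real.logb_nonpos one_lt_two (div_nonneg hPpos.le (hPpos.trans_le hPQ).le)
    rw [div_le_one (lt_of_lt_of_le hPpos hPQ)]
    exact hPQ

lemma H_comp (X : Ω → S) (f : S → T)
    (hf : ∀ ω ω', f (X ω) = f (X ω') → X ω = X ω') :
    H p (fun ω => f (X ω)) = H p X := by
  have himg : univ.image (fun ω => f (X ω)) = (univ.image X).image f := by
    rw [Finset.image_image]; rfl
  have hinj : ∀ x ∈ univ.image X, ∀ y ∈ univ.image X, f x = f y → x = y := by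
    intro x hx y hy hxy
    simp only [Finset.mem_image, Finset.mem_univ, true_and] at hx hy
    obtain ⟨ω, rfl⟩ := hx; obtain ⟨ω', rfl⟩ := hy
    exact hf ω ω' hxy
  have hprob : ∀ v ∈ univ.image X,
      probOf p (fun ω => f (X ω)) (f v) = probOf p X v := by
    intro v hv
    simp only [Finset.mem_image, Finset.mem_univ, true_and] at hv
    obtain ⟨ω', rfl⟩ := hv
    rw [probOf, probOf]
    apply Finset.sum_congr _ (fun _ _ => rfl)
    ext ω
    simp only [Finset.mem_filter, Finset.mem_univ, true_and]
    exact ⟨fun h => hf ω ω' h, fun h => by rw [h]⟩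
  rw [H, H, neg_inj, himg, Finset.sum_image hinj]
  apply Finset.sum_congr rfl
  intro v hv
  rw [hprob v hv]

lemma H_congr (X : Ω → S) (Y : Ω → T)
    (h : ∀ ω ω', X ω = X ω' ↔ Y ω = Y ω') :
    H p X = H p Y := by
  have h1 : H p (fun ω => Prod.fst ((fun ω => (X ω, Y ω)) ω)) = H p (fun ω => (X ω, Y ω)) :=
    H_comp (fun ω => (X ω, Y ω)) Prod.fst
      (fun ω ω' hf => Prod.ext hf ((h ω ω').1 hf))
  have h2 : H p (fun ω => Prod.snd ((fun ω => (X ω, Y ω)) ω)) = H p (fun ω => (X ω, Y ω)) :=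
    H_comp (fun ω => (X ω, Y ω)) Prod.snd
      (fun ω ω' hf => Prod.ext ((h ω ω').2 hf) hf)
  exact h1.trans h2.symm


end basic


lemma term_bound {P F G Q : ℝ} (hF : 0 ≤ F) (hG : 0 ≤ G) (hQ : 0 ≤ Q)
    (hc : P = 0 ∨ (0 < P ∧ P ≤ F ∧ P ≤ G ∧ P ≤ Q)) :
    P * Real.logb 2 F + P * Real.logb 2 G - (P * Real.logb 2 P + P * Real.logb 2 Q)
      ≤ (F * G / Q - P) / Real.log 2 := by
  have hlog2 : (0:ℝ) < Real.log 2 := Real.log_pos one_lt_two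
  rcases hc with rfl | ⟨hP, h1, h2, h3⟩
  · simp only [zero_mul, add_zero, sub_zero, zero_add, zero_sub, neg_zero, sub_zero]
    positivity
  · have hFpos : 0 < F := lt_of_lt_of_le hP h1
    have hGpos : 0 < G := lt_of_lt_of_le hP h2
    have hQpos : 0 < Q := lt_of_lt_of_le hP h3
    have hrpos : 0 < F * G / (Q * P) := by positivity
    have key : Real.logb 2 F + Real.logb 2 G - (Real.logb 2 P + Real.logb 2 Q)
        = Real.logb 2 (F * G / (Q * P)) := by
      rw [Real.logb_div (by positivity) (by positivity),
        Real.logb_mul hFpos.ne' hGpos.ne', Real.logb_mul hQpos.ne' hP.ne']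
      ring
    calc P * Real.logb 2 F + P * Real.logb 2 G
          - (P * Real.logb 2 P + P * Real.logb 2 Q)
        = P * (Real.logb 2 F + Real.logb 2 G - (Real.logb 2 P + Real.logb 2 Q)) := by ring
      _ = P * Real.logb 2 (F * G / (Q * P)) := by rw [key]
      _ ≤ P * ((F * G / (Q * P) - 1) / Real.log 2) := by
          apply mul_le_mul_of_nonneg_left _ hP.le
          rw [← Real.log_div_log]
          exact div_le_div_of_nonneg_right (Real.log_le_sub_one_of_pos hrpos) hlog2.le
      _ = (F * G / Q - P) / Real.log 2 := by
          field_simp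


section sub
variable {Ω S₁ S₂ S₃ : Type*} [Fintype Ω] [DecidableEq S₁] [DecidableEq S₂] [DecidableEq S₃]
  {p : Ω → ℝ}

lemma marg_fiber_le (hp : ∀ ω, 0 ≤ p ω) (X : Ω → S₁) (Z : Ω → S₃) (z : S₃)
    (t : Finset S₁) (ht : ∀ x ∈ t, ∃ ω, X ω = x ∧ Z ω = z) :
    ∑ x ∈ t, probOf p (fun ω => (X ω, Z ω)) (x, z) ≤ probOf p Z z := by
  have hmarg : ∑ v ∈ (univ.image (fun ω => (X ω, Z ω))).filter (fun v => v.2 = z),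
      probOf p (fun ω => (X ω, Z ω)) v = probOf p Z z :=
    marginal (fun ω => (X ω, Z ω)) Prod.snd z
  rw [← hmarg]
  have hinj : ∀ x ∈ t, ∀ y ∈ t, (fun x => ((x, z) : S₁ × S₃)) x = (fun x => (x, z)) y → x = y := by
    intro x _ y _ hxy
    exact (Prod.mk.injEq _ _ _ _ ▸ hxy).1
  rw [← Finset.sum_image (f := probOf p (fun ω => (X ω, Z ω))) hinj]
  apply Finset.sum_le_sum_of_subset_of_nonneg
  · intro u hu
    simp only [Finset.mem_image] at hu
    obtain ⟨x, hx, rfl⟩ := hu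
    obtain ⟨ω, hω1, hω2⟩ := ht x hx
    refine Finset.mem_filter.mpr ⟨?_, rfl⟩
    exact Finset.mem_image.mpr ⟨ω, Finset.mem_univ ω, by rw [hω1, hω2]⟩
  · exact fun u _ _ => probOf_nonneg hp _ _

lemma key_sum (hp : ∀ ω, 0 ≤ p ω) (hsum : ∑ ω, p ω = 1)
    (X : Ω → S₁) (Y : Ω → S₂) (Z : Ω → S₃) :
    ∑ v ∈ univ.image (fun ω => (X ω, Y ω, Z ω)),
      probOf p (fun ω => (X ω, Z ω)) (v.1, v.2.2) * probOf p (fun ω => (Y ω, Z ω)) v.2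
        / probOf p Z v.2.2 ≤ 1 := by
  have hmaps : ∀ v ∈ univ.image (fun ω => (X ω, Y ω, Z ω)),
      v.2.2 ∈ univ.image Z := by
    intro v hv
    simp only [Finset.mem_image, Finset.mem_univ, true_and] at hv ⊢
    obtain ⟨ω, rfl⟩ := hv
    exact ⟨ω, rfl⟩
  rw [← probOf_total hsum Z,
    ← Finset.sum_fiberwise_of_maps_to hmaps
      (fun v => probOf p (fun ω => (X ω, Z ω)) (v.1, v.2.2)
        * probOf p (fun ω => (Y ω, Z ω)) v.2 / probOf p Z v.2.2)]
  apply Finset.sum_le_sum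
  intro z hz
  set s := (univ.image (fun ω => (X ω, Y ω, Z ω))).filter (fun v => v.2.2 = z) with hs
  have hcongr : ∑ v ∈ s, probOf p (fun ω => (X ω, Z ω)) (v.1, v.2.2)
        * probOf p (fun ω => (Y ω, Z ω)) v.2 / probOf p Z v.2.2
      = ∑ v ∈ s, probOf p (fun ω => (X ω, Z ω)) (v.1, z)
        * probOf p (fun ω => (Y ω, Z ω)) (v.2.1, z) / probOf p Z z := by
    apply Finset.sum_congr rfl
    intro v hv
    simp only [hs, Finset.mem_filter] at hv
    have h2 : v.2 = (v.2.1, z) := by rw [← hv.2]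
    rw [hv.2, h2]
  rw [hcongr]
  by_cases hzz : probOf p Z z = 0
  · simp only [hzz, div_zero, Finset.sum_const_zero]
    exact le_refl 0
  · have hzpos : 0 < probOf p Z z := lt_of_le_of_ne (probOf_nonneg hp Z z) (Ne.symm hzz)
    rw [← Finset.sum_div, div_le_iff₀ hzpos]
    have hinj : ∀ v ∈ s, ∀ w ∈ s,
        (fun v : S₁ × S₂ × S₃ => (v.1, v.2.1)) v = (fun v => (v.1, v.2.1)) w → v = w := by
      intro v hv w hw hvw
      simp only [hs, Finset.mem_filter] at hv hw
      simp only [Prod.mk.injEq] at hvw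
      have := hv.2.trans hw.2.symm
      exact Prod.ext hvw.1 (Prod.ext hvw.2 (hv.2.trans hw.2.symm))
    rw [← Finset.sum_image (f := fun u : S₁ × S₂ =>
        probOf p (fun ω => (X ω, Z ω)) (u.1, z) * probOf p (fun ω => (Y ω, Z ω)) (u.2, z)) hinj]
    set s' := s.image (fun v : S₁ × S₂ × S₃ => (v.1, v.2.1)) with hs'
    calc ∑ u ∈ s', probOf p (fun ω => (X ω, Z ω)) (u.1, z)
          * probOf p (fun ω => (Y ω, Z ω)) (u.2, z)
        ≤ ∑ u ∈ (s'.image Prod.fst) ×ˢ (s'.image Prod.snd),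
            probOf p (fun ω => (X ω, Z ω)) (u.1, z)
              * probOf p (fun ω => (Y ω, Z ω)) (u.2, z) := by
          apply Finset.sum_le_sum_of_subset_of_nonneg Finset.subset_product
          exact fun u _ _ => mul_nonneg (probOf_nonneg hp _ _) (probOf_nonneg hp _ _)
      _ = (∑ x ∈ s'.image Prod.fst, probOf p (fun ω => (X ω, Z ω)) (x, z))
            * (∑ y ∈ s'.image Prod.snd, probOf p (fun ω => (Y ω, Z ω)) (y, z)) := by
          rw [Finset.sum_product, Finset.sum_mul_sum]
      _ ≤ probOf p Z z * probOf p Z z := by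
          apply mul_le_mul
          · apply marg_fiber_le hp X Z z
            intro x hx
            simp only [Finset.mem_image, hs', hs, Finset.mem_filter, Finset.mem_univ,
              true_and] at hx
            obtain ⟨u, ⟨v, ⟨⟨ω, hω⟩, hv2⟩, rfl⟩, rfl⟩ := hx
            exact ⟨ω, by rw [← hω], by rw [← hv2, ← hω]⟩
          · apply marg_fiber_le hp Y Z z
            intro y hy
            simp only [Finset.mem_image, hs', hs, Finset.mem_filter, Finset.mem_univ,
              true_and] at hy
            obtain ⟨u, ⟨v, ⟨⟨ω, hω⟩, hv2⟩, rfl⟩, rfl⟩ := hy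
            exact ⟨ω, by rw [← hω], by rw [← hv2, ← hω]⟩
          · apply Finset.sum_nonneg
            exact fun y _ => probOf_nonneg hp _ _
          · exact hzpos.le
end sub


section sub2
variable {Ω S₁ S₂ S₃ : Type*} [Fintype Ω] [DecidableEq S₁] [DecidableEq S₂] [DecidableEq S₃]
  {p : Ω → ℝ}

lemma submod (hp : ∀ ω, 0 ≤ p ω) (hsum : ∑ ω, p ω = 1)
    (X : Ω → S₁) (Y : Ω → S₂) (Z : Ω → S₃) :
    H p (fun ω => (X ω, Y ω, Z ω)) + H p Z
      ≤ H p (fun ω => (X ω, Z ω)) + H p (fun ω => (Y ω, Z ω)) := by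
  have hlog2 : (0:ℝ) < Real.log 2 := Real.log_pos one_lt_two
  have hW : H p (fun ω => (X ω, Y ω, Z ω)) = -∑ v ∈ univ.image (fun ω => (X ω, Y ω, Z ω)),
      probOf p (fun ω => (X ω, Y ω, Z ω)) v *
        Real.logb 2 (probOf p (fun ω => (X ω, Y ω, Z ω)) v) := rfl
  have hZ : H p Z = -∑ v ∈ univ.image (fun ω => (X ω, Y ω, Z ω)),
      probOf p (fun ω => (X ω, Y ω, Z ω)) v * Real.logb 2 (probOf p Z v.2.2) :=
    H_map (fun ω => (X ω, Y ω, Z ω)) (fun v => v.2.2)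
  have hXZ : H p (fun ω => (X ω, Z ω)) = -∑ v ∈ univ.image (fun ω => (X ω, Y ω, Z ω)),
      probOf p (fun ω => (X ω, Y ω, Z ω)) v *
        Real.logb 2 (probOf p (fun ω => (X ω, Z ω)) (v.1, v.2.2)) :=
    H_map (fun ω => (X ω, Y ω, Z ω)) (fun v => (v.1, v.2.2))
  have hYZ : H p (fun ω => (Y ω, Z ω)) = -∑ v ∈ univ.image (fun ω => (X ω, Y ω, Z ω)),
      probOf p (fun ω => (X ω, Y ω, Z ω)) v *
        Real.logb 2 (probOf p (fun ω => (Y ω, Z ω)) v.2) :=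
    H_map (fun ω => (X ω, Y ω, Z ω)) (fun v => v.2)
  rw [hW, hZ, hXZ, hYZ]
  have main : ∑ v ∈ univ.image (fun ω => (X ω, Y ω, Z ω)),
      (probOf p (fun ω => (X ω, Y ω, Z ω)) v *
          Real.logb 2 (probOf p (fun ω => (X ω, Z ω)) (v.1, v.2.2))
        + probOf p (fun ω => (X ω, Y ω, Z ω)) v *
          Real.logb 2 (probOf p (fun ω => (Y ω, Z ω)) v.2)
        - (probOf p (fun ω => (X ω, Y ω, Z ω)) v *
            Real.logb 2 (probOf p (fun ω => (X ω, Y ω, Z ω)) v)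
          + probOf p (fun ω => (X ω, Y ω, Z ω)) v *
            Real.logb 2 (probOf p Z v.2.2))) ≤ 0 := by
    have hbound : ∀ v ∈ univ.image (fun ω => (X ω, Y ω, Z ω)),
        (probOf p (fun ω => (X ω, Y ω, Z ω)) v *
          Real.logb 2 (probOf p (fun ω => (X ω, Z ω)) (v.1, v.2.2))
        + probOf p (fun ω => (X ω, Y ω, Z ω)) v *
          Real.logb 2 (probOf p (fun ω => (Y ω, Z ω)) v.2)
        - (probOf p (fun ω => (X ω, Y ω, Z ω)) v *
            Real.logb 2 (probOf p (fun ω => (X ω, Y ω, Z ω)) v)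
          + probOf p (fun ω => (X ω, Y ω, Z ω)) v *
            Real.logb 2 (probOf p Z v.2.2)))
        ≤ (probOf p (fun ω => (X ω, Z ω)) (v.1, v.2.2)
            * probOf p (fun ω => (Y ω, Z ω)) v.2 / probOf p Z v.2.2
          - probOf p (fun ω => (X ω, Y ω, Z ω)) v) / Real.log 2 := by
      intro v hv
      apply term_bound (probOf_nonneg hp _ _) (probOf_nonneg hp _ _) (probOf_nonneg hp _ _)
      by_cases h0 : probOf p (fun ω => (X ω, Y ω, Z ω)) v = 0
      · exact Or.inl h0
      · right
        have hPpos : 0 < probOf p (fun ω => (X ω, Y ω, Z ω)) v :=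
          lt_of_le_of_ne (probOf_nonneg hp _ _) (Ne.symm h0)
        refine ⟨hPpos, ?_, ?_, ?_⟩
        · exact probOf_le_map hp (fun ω => (X ω, Y ω, Z ω)) (fun v => (v.1, v.2.2)) v
        · exact probOf_le_map hp (fun ω => (X ω, Y ω, Z ω)) (fun v => v.2) v
        · exact probOf_le_map hp (fun ω => (X ω, Y ω, Z ω)) (fun v => v.2.2) v
    calc ∑ v ∈ univ.image (fun ω => (X ω, Y ω, Z ω)),
        (probOf p (fun ω => (X ω, Y ω, Z ω)) v *
          Real.logb 2 (probOf p (fun ω => (X ω, Z ω)) (v.1, v.2.2))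
        + probOf p (fun ω => (X ω, Y ω, Z ω)) v *
          Real.logb 2 (probOf p (fun ω => (Y ω, Z ω)) v.2)
        - (probOf p (fun ω => (X ω, Y ω, Z ω)) v *
            Real.logb 2 (probOf p (fun ω => (X ω, Y ω, Z ω)) v)
          + probOf p (fun ω => (X ω, Y ω, Z ω)) v *
            Real.logb 2 (probOf p Z v.2.2)))
        ≤ ∑ v ∈ univ.image (fun ω => (X ω, Y ω, Z ω)),
            (probOf p (fun ω => (X ω, Z ω)) (v.1, v.2.2)
              * probOf p (fun ω => (Y ω, Z ω)) v.2 / probOf p Z v.2.2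
            - probOf p (fun ω => (X ω, Y ω, Z ω)) v) / Real.log 2 :=
          Finset.sum_le_sum hbound
      _ = ((∑ v ∈ univ.image (fun ω => (X ω, Y ω, Z ω)),
            probOf p (fun ω => (X ω, Z ω)) (v.1, v.2.2)
              * probOf p (fun ω => (Y ω, Z ω)) v.2 / probOf p Z v.2.2)
          - 1) / Real.log 2 := by
          rw [← Finset.sum_div, Finset.sum_sub_distrib,
            probOf_total hsum (fun ω => (X ω, Y ω, Z ω))]
      _ ≤ 0 := by
          apply div_nonpos_of_nonpos_of_nonneg _ hlog2.le
          have := key_sum hp hsum X Y Z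
          linarith
  rw [Finset.sum_sub_distrib, Finset.sum_add_distrib, Finset.sum_add_distrib] at main
  linarith
end sub2


section finlayer
variable {Ω S : Type*} [Fintype Ω] [DecidableEq S] {n : ℕ} {p : Ω → ℝ}
  (X : Fin n → Ω → S)

lemma pair_congr (A B : Finset (Fin n)) :
    H p (fun ω => ((fun i : {i // i ∈ A} => X i.1 ω), (fun i : {i // i ∈ B} => X i.1 ω)))
      = jointH p X (A ∪ B) := by
  apply H_congr
  intro ω ω'
  simp only [Prod.mk.injEq, funext_iff, Subtype.forall, jointH]
  constructor
  · rintro ⟨h1, h2⟩ i hi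
    rcases Finset.mem_union.mp hi with hh | hh
    · exact h1 i hh
    · exact h2 i hh
  · intro hh
    exact ⟨fun i hi => hh i (Finset.mem_union_left _ hi),
      fun i hi => hh i (Finset.mem_union_right _ hi)⟩

lemma triple_congr (A B C : Finset (Fin n)) :
    H p (fun ω => ((fun i : {i // i ∈ A} => X i.1 ω),
        (fun i : {i // i ∈ B} => X i.1 ω), (fun i : {i // i ∈ C} => X i.1 ω)))
      = jointH p X (A ∪ B ∪ C) := by
  apply H_congr
  intro ω ω'
  simp only [Prod.mk.injEq, funext_iff, Subtype.forall, jointH]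
  constructor
  · rintro ⟨h1, h2, h3⟩ i hi
    rcases Finset.mem_union.mp hi with hh | hh
    · rcases Finset.mem_union.mp hh with hh' | hh'
      · exact h1 i hh'
      · exact h2 i hh'
    · exact h3 i hh
  · intro hh
    refine ⟨fun i hi => hh i ?_, fun i hi => hh i ?_, fun i hi => hh i ?_⟩
    · exact Finset.mem_union_left _ (Finset.mem_union_left _ hi)
    · exact Finset.mem_union_left _ (Finset.mem_union_right _ hi)
    · exact Finset.mem_union_right _ hi

lemma condJointH_eq (hp : ∀ ω, 0 ≤ p ω) (A B : Finset (Fin n)) :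
    condJointH p X A B = jointH p X (A ∪ B) - jointH p X B := by
  rw [condJointH, condH_chain hp, pair_congr]
  rfl

lemma jointH_empty (hsum : ∑ ω, p ω = 1) : jointH p X (∅ : Finset (Fin n)) = 0 := by
  have hΩ : Nonempty Ω := by
    by_contra hc
    rw [not_nonempty_iff] at hc
    rw [Finset.univ_eq_empty, Finset.sum_empty] at hsum
    norm_num at hsum
  have h1 : jointH p X ∅ = H p (fun _ : Ω => ()) := by
    apply H_congr
    intro ω ω'
    simp [funext_iff, Subtype.forall]
  rw [h1, H]
  have himg : (univ : Finset Ω).image (fun _ : Ω => ()) = {()} :=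
    Finset.image_const Finset.univ_nonempty ()
  have hprob : probOf p (fun _ : Ω => ()) () = 1 := by
    rw [probOf, Finset.filter_true_of_mem (fun x _ => rfl)]
    exact hsum
  rw [himg, Finset.sum_singleton, hprob]
  simp

lemma jointH_submod (hp : ∀ ω, 0 ≤ p ω) (hsum : ∑ ω, p ω = 1) (U W : Finset (Fin n)) :
    jointH p X (U ∪ W) + jointH p X (U ∩ W) ≤ jointH p X U + jointH p X W := by
  have h := submod hp hsum (fun ω (i : {i // i ∈ U \ W}) => X i.1 ω)
    (fun ω (i : {i // i ∈ W \ U}) => X i.1 ω) (fun ω (i : {i // i ∈ U ∩ W}) => X i.1 ω)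
  rw [triple_congr, pair_congr, pair_congr] at h
  have h2 : H p (fun ω (i : {i // i ∈ U ∩ W}) => X i.1 ω) = jointH p X (U ∩ W) := rfl
  rw [h2] at h
  have e1 : U \ W ∪ W \ U ∪ U ∩ W = U ∪ W := by
    ext i
    simp only [Finset.mem_union, Finset.mem_sdiff, Finset.mem_inter]
    tauto
  have e2 : U \ W ∪ U ∩ W = U := by
    ext i
    simp only [Finset.mem_union, Finset.mem_sdiff, Finset.mem_inter]
    tauto
  have e3 : W \ U ∪ U ∩ W = W := by
    ext i
    simp only [Finset.mem_union, Finset.mem_sdiff, Finset.mem_inter]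
    tauto
  rw [e1, e2, e3] at h
  exact h

lemma jointH_step (hp : ∀ ω, 0 ≤ p ω) (hsum : ∑ ω, p ω = 1)
    (C : Finset (Fin n)) (b : Fin n) (hC : C ⊆ Finset.Iio b) :
    jointH p X (Finset.Iic b) - jointH p X (Finset.Iio b)
      ≤ jointH p X (insert b C) - jointH p X C := by
  have h := jointH_submod X hp hsum (Finset.Iio b) (insert b C)
  have e1 : Finset.Iio b ∪ insert b C = Finset.Iic b := by
    ext i
    simp only [Finset.mem_union, Finset.mem_Iio, Finset.mem_insert, Finset.mem_Iic]
    constructor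
    · rintro (hh | rfl | hh)
      · exact hh.le
      · exact le_refl i
      · exact (Finset.mem_Iio.mp (hC hh)).le
    · intro hh
      rcases lt_or_eq_of_le hh with hh' | hh'
      · exact Or.inl hh'
      · exact Or.inr (Or.inl hh')
  have e2 : Finset.Iio b ∩ insert b C = C := by
    ext i
    simp only [Finset.mem_inter, Finset.mem_Iio, Finset.mem_insert]
    constructor
    · rintro ⟨hlt, rfl | hh⟩
      · exact absurd hlt (lt_irrefl i)
      · exact hh
    · intro hh
      exact ⟨Finset.mem_Iio.mp (hC hh), Or.inr hh⟩
  rw [e1, e2] at h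
  linarith

lemma main_ind (hp : ∀ ω, 0 ≤ p ω) (hsum : ∑ ω, p ω = 1) (A : Finset (Fin n)) :
    ∀ B : Finset (Fin n), (∀ i ∈ A, ∀ j ∈ B, j < i) →
      ∑ i ∈ A, (jointH p X (Finset.Iic i) - jointH p X (Finset.Iio i))
        ≤ jointH p X (A ∪ B) - jointH p X B := by
  induction A using Finset.induction_on_max with
  | empty => intro B _; simp
  | insert b A₀ hlt ih =>
    intro B hB
    have hbB : ∀ j ∈ B, j < b := hB b (Finset.mem_insert_self b A₀)
    have hbA : b ∉ A₀ := fun hc => lt_irrefl b (hlt b hc)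
    rw [Finset.sum_insert hbA]
    have h1 := ih B (fun i hi => hB i (Finset.mem_insert_of_mem hi))
    have hsub : A₀ ∪ B ⊆ Finset.Iio b := by
      intro i hi
      rw [Finset.mem_Iio]
      rcases Finset.mem_union.mp hi with hh | hh
      · exact hlt i hh
      · exact hbB i hh
    have h2 := jointH_step X hp hsum (A₀ ∪ B) b hsub
    rw [← Finset.insert_union] at h2
    linarith

lemma partial_sum (hp : ∀ ω, 0 ≤ p ω) (hsum : ∑ ω, p ω = 1) (k : ℕ) :
    ∑ i ∈ univ.filter (fun i : Fin n => (i : ℕ) < k),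
      (jointH p X (Finset.Iic i) - jointH p X (Finset.Iio i))
    = jointH p X (univ.filter (fun i : Fin n => (i : ℕ) < k)) := by
  induction k with
  | zero =>
    rw [show (univ.filter (fun i : Fin n => (i : ℕ) < 0)) = ∅ from by simp,
      Finset.sum_empty, jointH_empty X hsum]
  | succ k ihk =>
    by_cases hk : k < n
    · have hins : univ.filter (fun i : Fin n => (i : ℕ) < k + 1)
          = insert ⟨k, hk⟩ (univ.filter (fun i : Fin n => (i : ℕ) < k)) := by
        ext i
        simp only [Finset.mem_filter, Finset.mem_univ, true_and, Finset.mem_insert,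
          Nat.lt_succ_iff_lt_or_eq, Fin.ext_iff]
        tauto
      have hIic : Finset.Iic (⟨k, hk⟩ : Fin n)
          = univ.filter (fun i : Fin n => (i : ℕ) < k + 1) := by
        ext i
        simp [Finset.mem_Iic, Fin.le_def, Nat.lt_succ_iff]
      have hIio : Finset.Iio (⟨k, hk⟩ : Fin n)
          = univ.filter (fun i : Fin n => (i : ℕ) < k) := by
        ext i
        simp [Finset.mem_Iio, Fin.lt_def]
      have hnot : (⟨k, hk⟩ : Fin n) ∉ univ.filter (fun i : Fin n => (i : ℕ) < k) := by simp
      rw [hins, Finset.sum_insert hnot, ihk, hIic, hIio, ← hins]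
      ring
    · have hall : ∀ i : Fin n, (i : ℕ) < k := fun i => lt_of_lt_of_le i.2 (not_lt.mp hk)
      have : univ.filter (fun i : Fin n => (i : ℕ) < k + 1)
          = univ.filter (fun i : Fin n => (i : ℕ) < k) := by
        ext i
        simp [hall i, Nat.lt_succ_of_lt (hall i), (hall i).le]
      rw [this, ihk]

end finlayer



set_option maxRecDepth 8000 in
/-- Entropy Box Theorem: there are nonnegative `h₁,…,hₙ` summing to `H(X)` with
`H(X_A ∣ X_{A*}) ≤ ∑_{i∈A} hᵢ ≤ H(X_A ∣ X_{A_*})` for all nonempty `A ⊆ [n]`,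
where `A_* = {1,…,min A - 1}` and `A* = {1,…,max A - 1} ∖ A`. -/
theorem entropy_box_theorem {Ω S : Type*} [Fintype Ω] [DecidableEq S] {n : ℕ}
    (p : Ω → ℝ) (hp : ∀ ω, 0 ≤ p ω) (hsum : ∑ ω, p ω = 1)
    (X : Fin n → Ω → S) :
    ∃ h : Fin n → ℝ, (∀ i, 0 ≤ h i) ∧ jointH p X univ = ∑ i, h i ∧
      ∀ A : Finset (Fin n), ∀ hA : A.Nonempty,
        condJointH p X A (Finset.Iio (A.max' hA) \ A) ≤ ∑ i ∈ A, h i ∧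
        ∑ i ∈ A, h i ≤ condJointH p X A (Finset.Iio (A.min' hA)) := by
  refine ⟨fun i => jointH p X (Finset.Iic i) - jointH p X (Finset.Iio i), ?_, ?_, ?_⟩
  · intro i
    have hc : (0:ℝ) ≤ condJointH p X {i} (Finset.Iio i) := condH_nonneg hp _ _
    have he := condJointH_eq X hp {i} (Finset.Iio i)
    have hu : ({i} : Finset (Fin n)) ∪ Finset.Iio i = Finset.Iic i := by
      ext j
      simp only [Finset.mem_union, Finset.mem_singleton, Finset.mem_Iio, Finset.mem_Iic]
      constructor
      · rintro (rfl | hh)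
        · exact le_refl j
        · exact hh.le
      · intro hh
        rcases lt_or_eq_of_le hh with hh' | hh'
        · exact Or.inr hh'
        · exact Or.inl hh'
    rw [he, hu] at hc
    exact hc
  · have hps := partial_sum X hp hsum n
    have huniv : univ.filter (fun i : Fin n => (i : ℕ) < n) = univ :=
      Finset.filter_true_of_mem (fun i _ => i.isLt)
    rw [huniv] at hps
    exact hps.symm
  · intro A hA
    constructor
    · -- lower bound
      set b := A.max' hA with hb
      have hsplit : A ∪ (Finset.Iio b \ A) = Finset.Iic b := by
        ext i
        simp only [Finset.mem_union, Finset.mem_sdiff, Finset.mem_Iio, Finset.mem_Iic]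
        constructor
        · rintro (hh | ⟨hh, _⟩)
          · exact A.le_max' i hh
          · exact hh.le
        · intro hh
          by_cases hiA : i ∈ A
          · exact Or.inl hiA
          · refine Or.inr ⟨?_, hiA⟩
            rcases lt_or_eq_of_le hh with hh' | hh'
            · exact hh'
            · exact absurd (hh' ▸ A.max'_mem hA) hiA
      have he := condJointH_eq X hp A (Finset.Iio b \ A)
      rw [hsplit] at he
      have hIic : Finset.Iic b = univ.filter (fun i : Fin n => (i : ℕ) < (b : ℕ) + 1) := by
        ext i
        simp only [Finset.mem_Iic, Finset.mem_filter, Finset.mem_univ, true_and, Fin.le_def]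
        omega
      have hIic_eq : jointH p X (Finset.Iic b)
          = ∑ i ∈ Finset.Iic b, (jointH p X (Finset.Iic i) - jointH p X (Finset.Iio i)) := by
        rw [hIic, ← partial_sum X hp hsum ((b : ℕ) + 1)]
      have hdisj : Disjoint A (Finset.Iio b \ A) := Finset.disjoint_sdiff
      have hsum_split : ∑ i ∈ Finset.Iic b,
            (jointH p X (Finset.Iic i) - jointH p X (Finset.Iio i))
          = ∑ i ∈ A, (jointH p X (Finset.Iic i) - jointH p X (Finset.Iio i))
            + ∑ i ∈ Finset.Iio b \ A,
              (jointH p X (Finset.Iic i) - jointH p X (Finset.Iio i)) := by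
        rw [← hsplit, Finset.sum_union hdisj]
      have hL := main_ind X hp hsum (Finset.Iio b \ A) ∅ (by simp)
      rw [Finset.union_empty, jointH_empty X hsum] at hL
      rw [he, hIic_eq, hsum_split]
      linarith
    · -- upper bound
      have hcond : ∀ i ∈ A, ∀ j ∈ Finset.Iio (A.min' hA), j < i := by
        intro i hi j hj
        exact lt_of_lt_of_le (Finset.mem_Iio.mp hj) (A.min'_le i hi)
      have h2 := main_ind X hp hsum A (Finset.Iio (A.min' hA)) hcond
      have he := condJointH_eq X hp A (Finset.Iio (A.min' hA))
      linarith
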